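/- Let σ ≤ τ in the consecutive pattern poset 𝒫, let N = |τ| − |σ|, and for 0 ≤ r ≤ N let E_r = {π : σ ≤ π ≤ τ, |π| = |σ| + r}. Then for every 0 ≤ r ≤ N−1 and every subset S ⊆ E_r with |S| ≤ N − r, there exists an injection f : S → E_{r+1} such that π < f(π) for every π ∈ S. -/

import Mathlib

open scoped Classical

noncomputable section

/-- A permutation of length `n`, written in one-line notation as `τ 0, τ 1, …, τ (n-1)`. -/
abbrev Perm' (n : ℕ) := Equiv.Perm (Fin n)

/-- `σ` occurs in `τ` as a consecutive pattern at (0-indexed) starting position `i`: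
the window `τ i, …, τ (i+m-1)` of adjacent entries is in the same relative order as `σ`. -/
def OccursAt {m n : ℕ} (σ : Perm' m) (τ : Perm' n) (i : ℕ) : Prop :=
  ∃ h : i + m ≤ n, ∀ a b : Fin m,
    σ a < σ b ↔
      τ ⟨i + a, by have := a.isLt; omega⟩ < τ ⟨i + b, by have := b.isLt; omega⟩

/-- Consecutive pattern containment `σ ≤ τ`. -/
def PattLE {m n : ℕ} (σ : Perm' m) (τ : Perm' n) : Prop :=
  ∃ i, OccursAt σ τ i

/-- Permutations of arbitrary length: the carrier of the consecutive pattern poset. -/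
abbrev PermS : Type := Σ n : ℕ, Perm' n

/-- The order of the consecutive pattern poset. -/
def pLE (p q : PermS) : Prop := PattLE p.2 q.2

/-- The strict order of the consecutive pattern poset. -/
def pLT (p q : PermS) : Prop := pLE p q ∧ p ≠ q

/-- The covering relation of the consecutive pattern poset. -/
def pCovBy (p q : PermS) : Prop :=
  pLT p q ∧ ∀ r : PermS, pLT p r → pLT r q → False

/-- The open interval `(p,q)` in the consecutive pattern poset. -/
def openInterval (p q : PermS) : Set PermS := {r | pLT p r ∧ pLT r q}

/-- The Hasse diagram of the open interval `(p,q)`: vertices are the permutations strictly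
between `p` and `q`, edges are the covering relations of the consecutive pattern poset. -/
def hasse (p q : PermS) : SimpleGraph (openInterval p q) :=
  SimpleGraph.fromRel fun a b => pCovBy a.1 b.1

/-- The interval `[p,q]` is disconnected if the Hasse diagram of `(p,q)` is not connected. -/
def IntervalDisconnected (p q : PermS) : Prop := ¬ (hasse p q).Connected

/-- `window τ i m` is the reduction of the window of `τ` of length `m` starting at
(0-indexed) position `i`, i.e. the pattern `τ[i+1, i+m]` in 1-indexed notation. -/
def window {n : ℕ} (τ : Perm' n) (i m : ℕ) : Perm' m :=
  if h : i + m ≤ n then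
    (Tuple.sort fun a : Fin m => τ ⟨i + a, by have := a.isLt; omega⟩)⁻¹
  else 1

/-- `τ` is monotone, i.e. equal to `12…n` or `n…21`. -/
def IsMonotone {n : ℕ} (τ : Perm' n) : Prop :=
  (∀ a b : Fin n, a ≤ b → τ a ≤ τ b) ∨ (∀ a b : Fin n, a ≤ b → τ b ≤ τ a)

/-- `τ` has a bifix (a common proper prefix and proper suffix) of length `k`. -/
def HasBifixLen {n : ℕ} (τ : Perm' n) (k : ℕ) : Prop :=
  0 < k ∧ k < n ∧ window τ 0 k = window τ (n - k) k

/-- The length `|x(τ)|` of the exterior of `τ`, the longest bifix of `τ`. -/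
def extLen {n : ℕ} (τ : Perm' n) : ℕ := Nat.findGreatest (HasBifixLen τ) n

/-- The exterior `x(τ)` of `τ`: its longest bifix. -/
def extPerm {n : ℕ} (τ : Perm' n) : Perm' (extLen τ) := window τ 0 (extLen τ)

/-- The interior `i(τ) = τ[2,n-1]` of `τ`. -/
def intPerm {n : ℕ} (τ : Perm' n) : Perm' (n - 2) := window τ 1 (n - 2)

/-- `p` straddles `q`: `p < q`, `p` is both a prefix and a suffix of `q`,
and `p` has no other occurrence in `q`. -/
def Straddles (p q : PermS) : Prop :=
  pLT p q ∧ OccursAt p.2 q.2 0 ∧ OccursAt p.2 q.2 (q.1 - p.1) ∧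
    ∀ i, OccursAt p.2 q.2 i → i = 0 ∨ i = q.1 - p.1

/-- The interval `[p,q]` contains a non-trivial disconnected subinterval, i.e. a
subinterval `[a,b]` of rank at least 3 which is disconnected. -/
def HasNontrivDisconSub (p q : PermS) : Prop :=
  ∃ a b : PermS, pLE p a ∧ pLE a b ∧ pLE b q ∧ a.1 + 3 ≤ b.1 ∧ IntervalDisconnected a b

/-- The finite set of all permutations of length at most `N`. -/
def permsUpTo (N : ℕ) : Finset PermS :=
  (Finset.range (N + 1)).sigma fun n => (Finset.univ : Finset (Perm' n))

/-- The closed interval `[p,q]` of the consecutive pattern poset, as a finite set. -/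
def intervalF (p q : PermS) : Finset PermS :=
  (permsUpTo q.1).filter fun r => pLE p r ∧ pLE r q

/-- The number of elements of the interval `[σ,τ]` of rank `r`, i.e. of length `|σ| + r`. -/
def rankCard {m n : ℕ} (σ : Perm' m) (τ : Perm' n) (r : ℕ) : ℕ :=
  ((permsUpTo n).filter fun p => pLE ⟨m, σ⟩ p ∧ pLE p ⟨n, τ⟩ ∧ p.1 = m + r).card

/-- The direct sum `σ ⊕ π` of two permutations. -/
def dsum {m k : ℕ} (σ : Perm' m) (π : Perm' k) : Perm' (m + k) :=
  finSumFinEquiv.permCongr (σ.sumCongr π)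


section Stmt8Aux

private lemma sort_inv_lt_iff {k : ℕ} {α : Type*} [LinearOrder α] (g : Fin k → α)
    (hg : Function.Injective g) (a b : Fin k) :
    (Tuple.sort g)⁻¹ a < (Tuple.sort g)⁻¹ b ↔ g a < g b := by
  have hmono : StrictMono (g ∘ Tuple.sort g) :=
    (Tuple.monotone_sort g).strictMono_of_injective (hg.comp (Tuple.sort g).injective)
  rw [← hmono.lt_iff_lt]
  simp [Function.comp]

private lemma window_lt_iff {n : ℕ} (τ : Perm' n) {i k : ℕ} (h : i + k ≤ n) (a b : Fin k) :
    window τ i k a < window τ i k b ↔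
      τ ⟨i + a, by have := a.isLt; omega⟩ < τ ⟨i + b, by have := b.isLt; omega⟩ := by
  have hg : Function.Injective (fun a : Fin k => τ ⟨i + a, by have := a.isLt; omega⟩) := by
    intro a b hab
    have h2 := τ.injective hab
    have h3 : i + (a : ℕ) = i + (b : ℕ) := congrArg Fin.val h2
    exact Fin.ext (by omega)
  rw [window, dif_pos h]
  exact sort_inv_lt_iff _ hg a b

private lemma occursAt_window {n : ℕ} (τ : Perm' n) {i k : ℕ} (h : i + k ≤ n) :
    OccursAt (window τ i k) τ i :=
  ⟨h, fun a b => window_lt_iff τ h a b⟩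

private lemma perm_eq_one_of_strictMono {k : ℕ} (u : Perm' k) (h : StrictMono u) : u = 1 := by
  have e := StrictMono.orderIsoOfSurjective u h u.surjective
  ext x
  have h1 : (StrictMono.orderIsoOfSurjective u h u.surjective) x = u x := by
    rw [StrictMono.coe_orderIsoOfSurjective]
  have h2 := Fin.coe_orderIso_apply (StrictMono.orderIsoOfSurjective u h u.surjective) x
  rw [h1] at h2
  simpa using h2

private lemma occursAt_unique {n k : ℕ} {τ : Perm' n} {ρ : Perm' k} {i : ℕ}
    (h : OccursAt ρ τ i) : ρ = window τ i k := by
  obtain ⟨hle, hiff⟩ := h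
  have key : ∀ a b, ρ a < ρ b ↔ window τ i k a < window τ i k b := fun a b =>
    (hiff a b).trans (window_lt_iff τ hle a b).symm
  have hu : StrictMono (window τ i k * ρ⁻¹ : Perm' k) := by
    intro x y hxy
    have hx : ρ (ρ⁻¹ x) < ρ (ρ⁻¹ y) := by
      simpa using hxy
    simpa [Equiv.Perm.mul_apply] using (key _ _).mp hx
  have h1 : (window τ i k * ρ⁻¹ : Perm' k) = 1 := perm_eq_one_of_strictMono _ hu
  have := mul_inv_eq_one.mp h1
  exact this.symm

private lemma occursAt_eq {n : ℕ} {τ : Perm' n} {p q : PermS} (h1 : p.1 = q.1) {i : ℕ}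
    (hp : OccursAt p.2 τ i) (hq : OccursAt q.2 τ i) : p = q := by
  obtain ⟨a, π⟩ := p
  obtain ⟨b, ρ⟩ := q
  dsimp at h1 hp hq
  subst h1
  have h2 : π = ρ := (occursAt_unique hp).trans (occursAt_unique hq).symm
  rw [h2]

private lemma occursAt_trans {a b n : ℕ} {ρ : Perm' a} {π : Perm' b} {τ : Perm' n} {i j : ℕ}
    (h1 : OccursAt ρ π i) (h2 : OccursAt π τ j) : OccursAt ρ τ (j + i) := by
  obtain ⟨hab, hiff1⟩ := h1
  obtain ⟨hbn, hiff2⟩ := h2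
  refine ⟨by omega, fun x y => ?_⟩
  have hx := x.isLt; have hy := y.isLt
  refine (hiff1 x y).trans ((hiff2 ⟨i + x, by omega⟩ ⟨i + y, by omega⟩).trans ?_)
  have e1 : (⟨j + ((⟨i + (x : ℕ), by omega⟩ : Fin b) : ℕ), by omega⟩ : Fin n)
      = ⟨j + i + (x : ℕ), by omega⟩ := Fin.ext (by show j + (i + (x:ℕ)) = j + i + x; omega)
  have e2 : (⟨j + ((⟨i + (y : ℕ), by omega⟩ : Fin b) : ℕ), by omega⟩ : Fin n)
      = ⟨j + i + (y : ℕ), by omega⟩ := Fin.ext (by show j + (i + (y:ℕ)) = j + i + y; omega)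
  rw [e1, e2]

private lemma occursAt_sub {n l a i mρ : ℕ} {τ : Perm' n} {ρ : Perm' mρ}
    (hal : a + l ≤ n) (hil : i + mρ ≤ l) (hρ : OccursAt ρ τ (a + i)) :
    OccursAt ρ (window τ a l) i := by
  obtain ⟨hb, hiff⟩ := hρ
  have hw := (occursAt_window τ hal).2
  refine ⟨hil, fun x y => ?_⟩
  have hx := x.isLt; have hy := y.isLt
  refine (hiff x y).trans ?_
  have h2 := hw ⟨i + (x : ℕ), by omega⟩ ⟨i + (y : ℕ), by omega⟩
  have e1 : (⟨a + ((⟨i + (x : ℕ), by omega⟩ : Fin l) : ℕ), by omega⟩ : Fin n)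
      = ⟨a + i + (x : ℕ), by omega⟩ := Fin.ext (by show a + (i + (x:ℕ)) = a + i + x; omega)
  have e2 : (⟨a + ((⟨i + (y : ℕ), by omega⟩ : Fin l) : ℕ), by omega⟩ : Fin n)
      = ⟨a + i + (y : ℕ), by omega⟩ := Fin.ext (by show a + (i + (y:ℕ)) = a + i + y; omega)
  rw [e1, e2] at h2
  exact h2.symm

private lemma pLE_trans' {p q w : PermS} (h1 : pLE p q) (h2 : pLE q w) : pLE p w := by
  obtain ⟨i, hi⟩ := h1
  obtain ⟨j, hj⟩ := h2
  exact ⟨j + i, occursAt_trans hi hj⟩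

end Stmt8Aux

/-- Lemma 5.2: for `σ ≤ τ`, `N = |τ| - |σ|`, `0 ≤ r ≤ N - 1`, and any
choice `S` of at most `N - r` elements of rank `r` of `[σ,τ]`, there is an injection `f`
of `S` into the elements of rank `r+1` with `π < f π` for all `π ∈ S`. -/
theorem stmt8 {m n : ℕ} (hm : 1 ≤ m) (σ : Perm' m) (τ : Perm' n) (hle : PattLE σ τ)
    (r : ℕ) (hr : r + 1 ≤ n - m) (S : Finset PermS)
    (hS : ∀ p ∈ S, pLE ⟨m, σ⟩ p ∧ pLE p ⟨n, τ⟩ ∧ p.1 = m + r)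
    (hcard : S.card ≤ n - m - r) :
    ∃ f : PermS → PermS, Set.InjOn f S ∧
      ∀ p ∈ S, (pLE ⟨m, σ⟩ (f p) ∧ pLE (f p) ⟨n, τ⟩ ∧ (f p).1 = m + (r + 1)) ∧
        pLT p (f p) := by
  classical
  have hkn : m + r + 1 ≤ n := by omega
  set L : PermS → ℕ := fun p => sInf {i | OccursAt p.2 τ i} with hLdef
  have hLocc : ∀ p ∈ S, OccursAt p.2 τ (L p) := fun p hp => Nat.sInf_mem (hS p hp).2.1
  have hLmin : ∀ (p : PermS) (j : ℕ), OccursAt p.2 τ j → L p ≤ j := fun p j h =>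
    Nat.sInf_le h
  have hLle : ∀ p ∈ S, L p + (m + r) ≤ n := by
    intro p hp
    obtain ⟨h, -⟩ := hLocc p hp
    have h4 := (hS p hp).2.2
    omega
  have hnsub : ¬ Finset.range (n - m - r + 1) ⊆ S.image L := by
    intro hsub
    have h1 := Finset.card_le_card hsub
    have h2 := Finset.card_image_le (s := S) (f := L)
    rw [Finset.card_range] at h1
    omega
  obtain ⟨t, htmem, htnot⟩ := Finset.not_subset.mp hnsub
  have ht : t ≤ n - m - r := by
    have := Finset.mem_range.mp htmem
    omega
  have htne : ∀ p ∈ S, L p ≠ t := fun p hp h => htnot (Finset.mem_image.mpr ⟨p, hp, h⟩)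
  have hfacts : ∀ p ∈ S, ((if L p < t then L p else L p - 1) + (m + r + 1) ≤ n) ∧
      OccursAt p.2 (window τ (if L p < t then L p else L p - 1) (m + r + 1))
        (if L p < t then 0 else 1) := by
    intro p hp
    have h1 := hLle p hp
    have h2 := htne p hp
    have h3 := hLocc p hp
    have h4 := (hS p hp).2.2
    by_cases hlt : L p < t
    · simp only [if_pos hlt]
      have hb : L p + (m + r + 1) ≤ n := by omega
      refine ⟨hb, occursAt_sub hb (by omega) ?_⟩
      rw [Nat.add_zero]
      exact h3
    · simp only [if_neg hlt]
      have hgt : t < L p := by omega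
      have hb : (L p - 1) + (m + r + 1) ≤ n := by omega
      refine ⟨hb, occursAt_sub hb (by omega) ?_⟩
      have he : L p - 1 + 1 = L p := by omega
      rw [he]
      exact h3
  refine ⟨fun p => ⟨m + r + 1, window τ (if L p < t then L p else L p - 1) (m + r + 1)⟩,
    ?_, ?_⟩
  · intro p hp' q hq' hfeq
    have hp : p ∈ S := hp'
    have hq : q ∈ S := hq'
    have hw : window τ (if L p < t then L p else L p - 1) (m + r + 1)
        = window τ (if L q < t then L q else L q - 1) (m + r + 1) := by
      simpa using hfeq
    have hop := (hfacts p hp).2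
    have hoq := (hfacts q hq).2
    have hbp := (hfacts p hp).1
    have hbq := (hfacts q hq).1
    have hlen : p.1 = q.1 := by rw [(hS p hp).2.2, (hS q hq).2.2]
    by_cases h1 : L p < t <;> by_cases h2 : L q < t
    · simp only [if_pos h1] at hop
      simp only [if_pos h2] at hoq
      simp only [if_pos h1, if_pos h2] at hw
      rw [← hw] at hoq
      exact occursAt_eq hlen hop hoq
    · exfalso
      simp only [if_pos h1, if_neg h2] at hw
      simp only [if_pos h1] at hbp
      simp only [if_neg h2] at hoq
      rw [← hw] at hoq
      have hocc : OccursAt q.2 τ (L p + 1) :=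
        occursAt_trans hoq (occursAt_window τ hbp)
      have hmin := hLmin q _ hocc
      have := htne q hq
      omega
    · exfalso
      simp only [if_pos h2, if_neg h1] at hw
      simp only [if_pos h2] at hbq
      simp only [if_neg h1] at hop
      rw [hw] at hop
      have hocc : OccursAt p.2 τ (L q + 1) :=
        occursAt_trans hop (occursAt_window τ hbq)
      have hmin := hLmin p _ hocc
      have := htne p hp
      omega
    · simp only [if_neg h1] at hop
      simp only [if_neg h2] at hoq
      simp only [if_neg h1, if_neg h2] at hw
      rw [← hw] at hoq
      exact occursAt_eq hlen hop hoq
  · intro p hp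
    have hb := (hfacts p hp).1
    have hoc := (hfacts p hp).2
    have hple : pLE p ⟨m + r + 1, window τ (if L p < t then L p else L p - 1) (m + r + 1)⟩ :=
      ⟨_, hoc⟩
    refine ⟨⟨pLE_trans' (hS p hp).1 hple, ⟨_, occursAt_window τ hb⟩, rfl⟩, hple, ?_⟩
    intro h
    have h5 := congrArg Sigma.fst h
    have h4 := (hS p hp).2.2
    simp only at h5
    omega

end
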